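/- In the twisted Schrödinger–Virasoro Lie algebra SV, the maps D₁, D₂, D₃ defined on basis elements by D₁(L_m) = M_m, D₁(Y_m) = D₁(M_m) = 0; D₂(L_m) = m·M_m, D₂(Y_m) = D₂(M_m) = 0; D₃(L_m) = 0, D₃(Y_m) = Y_m, D₃(M_m) = 2·M_m, extended linearly, are derivations of SV: D_i([x,y]) = [D_i(x), y] + [x, D_i(y)] for all x, y ∈ SV and i = 1, 2, 3. -/

import Mathlib

lemma basis_deriv {V : Type} [LieRing V] [LieAlgebra ℂ V] {ι : Type}
    (b : Module.Basis ι ℂ V) (D : V →ₗ[ℂ] V)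
    (h : ∀ p q : ι, D ⁅b p, b q⁆ = ⁅D (b p), b q⁆ + ⁅b p, D (b q)⁆) :
    ∀ x y : V, D ⁅x, y⁆ = ⁅D x, y⁆ + ⁅x, D y⁆ := by
  have key : (LinearMap.mk₂ ℂ (fun x y : V => D ⁅x, y⁆ - (⁅D x, y⁆ + ⁅x, D y⁆))
      (by intro x x' y; simp [add_lie]; abel)
      (by intro c x y; simp [smul_lie, lie_smul, smul_sub, smul_add])
      (by intro x y y'; simp [lie_add]; abel)
      (by intro c x y; simp [smul_lie, lie_smul, smul_sub, smul_add])) = 0 := by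
    apply b.ext
    intro p
    apply b.ext
    intro q
    simp [LinearMap.mk₂_apply, sub_eq_zero, h p q]
  intro x y
  have h2 := LinearMap.congr_fun (LinearMap.congr_fun key x) y
  simpa [LinearMap.mk₂_apply, sub_eq_zero] using h2

theorem stmt12
    (V : Type) [LieRing V] [LieAlgebra ℂ V]
    (L Y M : ℤ → V)
    (b : Module.Basis (Fin 3 × ℤ) ℂ V)
    (hbL : ∀ i : ℤ, b ((0 : Fin 3), i) = L i)
    (hbY : ∀ i : ℤ, b ((1 : Fin 3), i) = Y i)
    (hbM : ∀ i : ℤ, b ((2 : Fin 3), i) = M i)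
    (hLL : ∀ m n : ℤ, ⁅L m, L n⁆ = ((m : ℂ) - n) • L (m + n))
    (hLY : ∀ m n : ℤ, ⁅L m, Y n⁆ = ((m : ℂ) / 2 - n) • Y (m + n))
    (hLM : ∀ m n : ℤ, ⁅L m, M n⁆ = (-(n : ℂ)) • M (m + n))
    (hYY : ∀ m n : ℤ, ⁅Y m, Y n⁆ = ((m : ℂ) - n) • M (m + n))
    (hYM : ∀ m n : ℤ, ⁅Y m, M n⁆ = 0)
    (hMM : ∀ m n : ℤ, ⁅M m, M n⁆ = 0)
    (D₁ D₂ D₃ : V →ₗ[ℂ] V)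
    (hD1L : ∀ m : ℤ, D₁ (L m) = M m) (hD1Y : ∀ m : ℤ, D₁ (Y m) = 0)
    (hD1M : ∀ m : ℤ, D₁ (M m) = 0)
    (hD2L : ∀ m : ℤ, D₂ (L m) = (m : ℂ) • M m) (hD2Y : ∀ m : ℤ, D₂ (Y m) = 0)
    (hD2M : ∀ m : ℤ, D₂ (M m) = 0)
    (hD3L : ∀ m : ℤ, D₃ (L m) = 0) (hD3Y : ∀ m : ℤ, D₃ (Y m) = Y m)
    (hD3M : ∀ m : ℤ, D₃ (M m) = (2 : ℂ) • M m) :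
    (∀ x y : V, D₁ ⁅x, y⁆ = ⁅D₁ x, y⁆ + ⁅x, D₁ y⁆) ∧
    (∀ x y : V, D₂ ⁅x, y⁆ = ⁅D₂ x, y⁆ + ⁅x, D₂ y⁆) ∧
    (∀ x y : V, D₃ ⁅x, y⁆ = ⁅D₃ x, y⁆ + ⁅x, D₃ y⁆) := by
  have hYL : ∀ m n : ℤ, ⁅Y m, L n⁆ = ((m : ℂ) - n / 2) • Y (m + n) := by
    intro m n; rw [← lie_skew, hLY, add_comm n m]; module
  have hML : ∀ m n : ℤ, ⁅M m, L n⁆ = (m : ℂ) • M (m + n) := by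
    intro m n; rw [← lie_skew, hLM, add_comm n m]; module
  have hMY : ∀ m n : ℤ, ⁅M m, Y n⁆ = 0 := by
    intro m n; rw [← lie_skew, hYM, neg_zero]
  refine ⟨basis_deriv b D₁ ?_, basis_deriv b D₂ ?_, basis_deriv b D₃ ?_⟩ <;>
  · rintro ⟨i, m⟩ ⟨j, n⟩
    fin_cases i <;> fin_cases j <;>
      simp only [show ((⟨0, by omega⟩ : Fin 3)) = 0 from rfl,
        show ((⟨1, by omega⟩ : Fin 3)) = 1 from rfl,
        show ((⟨2, by omega⟩ : Fin 3)) = 2 from rfl, hbL, hbY, hbM, hLL, hLY, hLM, hYY, hYM, hMM, hYL, hML, hMY,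
        hD1L, hD1Y, hD1M, hD2L, hD2Y, hD2M, hD3L, hD3Y, hD3M,
        map_smul, map_zero, smul_zero, zero_lie, lie_zero, lie_smul, smul_lie,
        add_zero, zero_add, smul_smul] <;>
      try module
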